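/- Let P_s, …, P_{s+k} in ℝ³ have strictly increasing time coordinates, ε > 0, and t_c = P_{s+k}.t. For each i ∈ [1,k] let R_{s+i} be the inscribed regular m-gon of the projection disk of cone C(P_s, O(P_{s+i}, ε)) on the plane X.t = t_c. If R*_k = ⋂_{i=1}^k R_{s+i} is nonempty, then for every point Q in R*_k (viewed as a point with Q.t = t_c), sed(P_{s+i}, segment P_sQ) ≤ ε for all i ∈ [1,k]. -/

import Mathlib

noncomputable section

/-- Points of ℝ³, written (x, y, t) with the third coordinate interpreted as time. -/
abbrev Pt : Type := EuclideanSpace ℝ (Fin 3)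

/-- The time coordinate of a point. -/
def tm (P : Pt) : ℝ := P 2

/-- Spatial (x,y)-Euclidean distance between two points of ℝ³. -/
def sdist (P Q : Pt) : ℝ := Real.sqrt ((P 0 - Q 0)^2 + (P 1 - Q 1)^2)

/-- The synchronized point of P w.r.t. the segment from Ps to E:
linear interpolation with coefficient c = (P.t - Ps.t)/(E.t - Ps.t). -/
def sync (Ps E P : Pt) : Pt := Ps + ((tm P - tm Ps) / (tm E - tm Ps)) • (E - Ps)

/-- The synchronous Euclidean distance of P to the segment from Ps to E. -/
def sed (P Ps E : Pt) : ℝ := dist P (sync Ps E P)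

/-- The spatio-temporal cone with apex Ps over the disk of radius ε
centered at C in the plane X.t = C.t: the union of all segments from Ps
to points of that disk. -/
def cone (Ps C : Pt) (ε : ℝ) : Set Pt :=
  {X | ∃ Z : Pt, tm Z = tm C ∧ sdist Z C ≤ ε ∧ X ∈ segment ℝ Ps Z}

/-- The j-th vertex direction in the spatial plane (time coordinate 0). -/
def uvec3 (m j : ℕ) : Pt :=
  WithLp.toLp 2 ![Real.cos (2 * Real.pi * j / m), Real.sin (2 * Real.pi * j / m), 0]

/-- The inscribed regular m-gon of the projection disk (on the plane
X.t = t_c) of the cone with apex Ps over the disk of radius ε centered at Pi: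
the disk has center Ps + c·(Pi - Ps) and radius c·ε, c = (t_c - Ps.t)/(Pi.t - Ps.t). -/
def projNgon (Ps Pi : Pt) (ε tc : ℝ) (m : ℕ) : Set Pt :=
  convexHull ℝ (Set.range fun j : Fin m =>
    (Ps + ((tc - tm Ps) / (tm Pi - tm Ps)) • (Pi - Ps)) +
      (((tc - tm Ps) / (tm Pi - tm Ps)) * ε) • uvec3 m (j : ℕ))

/-- if the intersection of the inscribed regular m-gons of the
projection disks (on the plane X.t = P_{s+k}.t) is nonempty, then every point Q
of the intersection satisfies sed(P_{s+i}, segment P_sQ) ≤ ε for all i ∈ [1,k]. -/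
theorem stmt9 (m : ℕ) (hm : 3 ≤ m) (k : ℕ) (hk : 1 ≤ k) (P : ℕ → Pt)
    (hmono : ∀ i j : ℕ, i < j → j ≤ k → tm (P i) < tm (P j))
    (ε : ℝ) (hε : 0 < ε) :
    ∀ Q ∈ ⋂ i ∈ Set.Icc 1 k, projNgon (P 0) (P i) ε (tm (P k)) m,
      ∀ i : ℕ, 1 ≤ i → i ≤ k → sed (P i) (P 0) Q ≤ ε := by
  intro Q hQ i hi1 hik
  have hadd : ∀ X Y : Pt, (X + Y) 2 = X 2 + Y 2 := fun _ _ => rfl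
  have hsmul : ∀ (r : ℝ) (X : Pt), (r • X) 2 = r * X 2 := fun _ _ => rfl
  have hsub' : ∀ X Y : Pt, (X - Y) 2 = X 2 - Y 2 := fun _ _ => rfl
  have hu2 : ∀ j : ℕ, uvec3 m j 2 = 0 := fun _ => rfl
  have h0i : tm (P 0) < tm (P i) := hmono 0 i (by omega) hik
  have h0k : tm (P 0) < tm (P k) := hmono 0 k (by omega) le_rfl
  have hik' : tm (P i) ≤ tm (P k) := by
    rcases eq_or_lt_of_le hik with h | h
    · rw [h]
    · exact (hmono i k h le_rfl).le
  have hne : P i 2 - P 0 2 ≠ 0 := by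
    have := h0i; simp only [tm] at this; linarith
  set c : ℝ := (tm (P k) - tm (P 0)) / (tm (P i) - tm (P 0)) with hc
  have hc0 : 0 < c := div_pos (by linarith) (by linarith)
  set Ci : Pt := P 0 + c • (P i - P 0) with hCi
  have hQi : Q ∈ projNgon (P 0) (P i) ε (tm (P k)) m :=
    Set.mem_iInter₂.mp hQ i ⟨hi1, hik⟩
  have huv : ∀ j : ℕ, ‖uvec3 m j‖ = 1 := by
    intro j
    rw [EuclideanSpace.norm_eq]
    simp only [uvec3, Fin.sum_univ_three, Matrix.cons_val_zero, Matrix.cons_val_one,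
      Matrix.head_cons, Matrix.cons_val_two, Matrix.tail_cons, Real.norm_eq_abs, sq_abs]
    rw [show (0:ℝ) ^ 2 = 0 by norm_num, add_zero, Real.cos_sq_add_sin_sq, Real.sqrt_one]
  -- Fact A : Q is in the closed ball of radius c*ε around Ci
  have hball : dist Q Ci ≤ c * ε := by
    have : Q ∈ Metric.closedBall Ci (c * ε) := by
      refine convexHull_min ?_ (convex_closedBall _ _) hQi
      rintro _ ⟨j, rfl⟩
      have hd : dist (Ci + (c * ε) • uvec3 m (j : ℕ)) Ci = ‖(c * ε) • uvec3 m (j : ℕ)‖ := by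
        rw [dist_eq_norm]
        congr 1
        abel
      rw [Metric.mem_closedBall, hd, norm_smul, huv, mul_one, Real.norm_eq_abs,
        abs_of_pos (mul_pos hc0 hε)]
    simpa [Metric.mem_closedBall] using this
  -- Fact B : tm Q = tm (P k)
  have htQ : tm Q = tm (P k) := by
    have hconv : Convex ℝ {X : Pt | tm X = tm (P k)} := by
      intro x hx y hy a b ha hb hab
      simp only [Set.mem_setOf_eq, tm] at hx hy ⊢
      have hxy : (a • x + b • y) 2 = a * x 2 + b * y 2 := rfl
      rw [hxy, hx, hy]
      linear_combination (P k 2) * hab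
    have hsub : projNgon (P 0) (P i) ε (tm (P k)) m ⊆ {X : Pt | tm X = tm (P k)} := by
      refine convexHull_min ?_ hconv
      rintro _ ⟨j, rfl⟩
      simp only [Set.mem_setOf_eq, tm, hadd, hsmul, hsub', hu2, mul_zero, add_zero]
      field_simp
      ring
    exact hsub hQi
  -- the interpolation coefficient equals c⁻¹
  have hlam : (tm (P i) - tm (P 0)) / (tm Q - tm (P 0)) = c⁻¹ := by
    rw [htQ, hc, inv_div]
  -- key algebraic identity
  have hkey : P i - (P 0 + c⁻¹ • (Q - P 0)) = c⁻¹ • (Ci - Q) := by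
    rw [hCi]
    have h1 : c ≠ 0 := hc0.ne'
    match_scalars <;> field_simp <;> ring
  calc sed (P i) (P 0) Q = dist (P i) (P 0 + c⁻¹ • (Q - P 0)) := by
        unfold sed sync
        rw [hlam]
    _ = ‖c⁻¹ • (Ci - Q)‖ := by rw [dist_eq_norm, hkey]
    _ = c⁻¹ * ‖Ci - Q‖ := by
        rw [norm_smul, Real.norm_eq_abs, abs_of_pos (inv_pos.mpr hc0)]
    _ = c⁻¹ * dist Q Ci := by rw [dist_eq_norm, norm_sub_rev]
    _ ≤ c⁻¹ * (c * ε) := mul_le_mul_of_nonneg_left hball (inv_pos.mpr hc0).le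
    _ = ε := by field_simp
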